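/- Combinatorial multiplicity count in the twisted branching rule: let k ≥ 2, let λ be a strict partition with k parts and ν a strict partition with k−1 parts. Then the number of partitions μ = (μ_1 ≥ … ≥ μ_{k−1} ≥ 0) such that μ ◁ λ−δ_k and μ_i ≤ (ν−δ_{k−1})_i ≤ μ_i + 1 for all 1 ≤ i ≤ k−1 (i.e., the skew shape (ν−δ_{k−1})/μ is a vertical strip) equals 2^{∇(λ,ν)} if ν ◁ λ, and equals 0 otherwise. -/

import Mathlib

/-- Combinatorial multiplicity count in the twisted branching rule, with
`k = n + 1 ≥ 2`: for a strict partition `λ` with `k` parts and a strict partition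
`ν` with `k - 1` parts, the number of partitions `μ` with `μ ◁ λ - δ_k` such that
the skew shape `(ν - δ_{k-1})/μ` is a vertical strip (`μ_i ≤ (ν-δ_{k-1})_i ≤ μ_i + 1`)
equals `2^{∇(λ,ν)}` if `ν ◁ λ`, and `0` otherwise; here
`∇(λ,ν) = #{i : λ_i > ν_i > λ_{i+1}}`, `δ_k = (k-1, …, 1, 0)` and
`δ_{k-1} = (k-2, …, 1, 0)`. -/
theorem twisted_branching_multiplicity_count (n : ℕ) (hn : 1 ≤ n)
    (lam : Fin (n + 1) → ℕ)
    (hlam : ∀ i j : Fin (n + 1), i < j → lam j < lam i)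
    (ν : Fin n → ℕ) (hν : ∀ i j : Fin n, i < j → ν j < ν i) :
    Nat.card {μ : Fin n → ℕ //
        (∀ i j : Fin n, i ≤ j → μ j ≤ μ i) ∧
        (∀ i : Fin n,
          lam i.succ - (n - ((i : ℕ) + 1)) ≤ μ i ∧
            μ i ≤ lam i.castSucc - (n - (i : ℕ))) ∧
        (∀ i : Fin n, μ i ≤ ν i - (n - 1 - (i : ℕ)) ∧
            ν i - (n - 1 - (i : ℕ)) ≤ μ i + 1)} =
      if ∀ i : Fin n, lam i.succ ≤ ν i ∧ ν i ≤ lam i.castSucc then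
        2 ^ (Finset.univ.filter
          (fun i : Fin n => lam i.succ < ν i ∧ ν i < lam i.castSucc)).card
      else 0 := by
  classical
  -- lower bounds forced by strictness
  have hlamge : ∀ i : Fin (n + 1), n - (i : ℕ) ≤ lam i := by
    have key : ∀ m : ℕ, ∀ i : Fin (n + 1), (i : ℕ) + m = n → m ≤ lam i := by
      intro m
      induction m with
      | zero => intro i _; exact Nat.zero_le _
      | succ m ih =>
        intro i hi
        have hlt : (i : ℕ) + 1 < n + 1 := by omega
        have h1 := hlam i ⟨(i : ℕ) + 1, hlt⟩ (by simp [Fin.lt_def])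
        have h2 := ih ⟨(i : ℕ) + 1, hlt⟩ (by simp; omega)
        omega
    intro i
    have hle : (i : ℕ) ≤ n := Fin.is_le i
    have := key (n - (i : ℕ)) i (by omega)
    omega
  have hνge : ∀ i : Fin n, n - 1 - (i : ℕ) ≤ ν i := by
    have key : ∀ m : ℕ, ∀ i : Fin n, (i : ℕ) + m = n - 1 → m ≤ ν i := by
      intro m
      induction m with
      | zero => intro i _; exact Nat.zero_le _
      | succ m ih =>
        intro i hi
        have hlt : (i : ℕ) + 1 < n := by omega
        have h1 := hν i ⟨(i : ℕ) + 1, hlt⟩ (by simp [Fin.lt_def])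
        have h2 := ih ⟨(i : ℕ) + 1, hlt⟩ (by simp; omega)
        omega
    intro i
    have hle : (i : ℕ) < n := i.isLt
    have := key (n - 1 - (i : ℕ)) i (by omega)
    omega
  set lo : Fin n → ℕ :=
    fun i => max (lam i.succ - (n - ((i : ℕ) + 1))) (ν i - (n - 1 - (i : ℕ)) - 1) with hlo
  set hi : Fin n → ℕ :=
    fun i => min (lam i.castSucc - (n - (i : ℕ))) (ν i - (n - 1 - (i : ℕ))) with hhi
  -- the defining property is equivalent to a product of interval conditions
  have hequiv : ∀ μ : Fin n → ℕ,
      ((∀ i j : Fin n, i ≤ j → μ j ≤ μ i) ∧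
        (∀ i : Fin n,
          lam i.succ - (n - ((i : ℕ) + 1)) ≤ μ i ∧
            μ i ≤ lam i.castSucc - (n - (i : ℕ))) ∧
        (∀ i : Fin n, μ i ≤ ν i - (n - 1 - (i : ℕ)) ∧
            ν i - (n - 1 - (i : ℕ)) ≤ μ i + 1)) ↔
      (∀ i : Fin n, μ i ∈ Finset.Icc (lo i) (hi i)) := by
    intro μ
    constructor
    · rintro ⟨-, h2, h3⟩ i
      have a := h2 i
      have b := h3 i
      simp only [hlo, hhi, Finset.mem_Icc]
      omega
    · intro h
      have hIcc : ∀ i : Fin n,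
          (lam i.succ - (n - ((i : ℕ) + 1)) ≤ μ i ∧
            μ i ≤ lam i.castSucc - (n - (i : ℕ))) ∧
          (μ i ≤ ν i - (n - 1 - (i : ℕ)) ∧
            ν i - (n - 1 - (i : ℕ)) ≤ μ i + 1) := by
        intro i
        have := h i
        simp only [hlo, hhi, Finset.mem_Icc] at this
        omega
      refine ⟨?_, fun i => (hIcc i).1, fun i => (hIcc i).2⟩
      -- monotonicity follows from the interlacing bounds
      have step : ∀ i j : Fin n, (j : ℕ) = (i : ℕ) + 1 → μ j ≤ μ i := by
        intro i j hij
        have h1 : lam i.succ - (n - ((i : ℕ) + 1)) ≤ μ i := (hIcc i).1.1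
        have h2 : μ j ≤ lam j.castSucc - (n - (j : ℕ)) := (hIcc j).1.2
        have he : j.castSucc = i.succ := by
          apply Fin.ext
          simp [hij]
        rw [he, hij] at h2
        omega
      have gen : ∀ d : ℕ, ∀ i j : Fin n, (j : ℕ) = (i : ℕ) + d → μ j ≤ μ i := by
        intro d
        induction d with
        | zero =>
          intro i j hij
          have : j = i := Fin.ext (by omega)
          rw [this]
        | succ d ih =>
          intro i j hij
          have hlt : (i : ℕ) + d < n := by have := j.isLt; omega
          have h1 := step ⟨(i : ℕ) + d, hlt⟩ j (by simp [hij]; omega)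
          have h2 := ih i ⟨(i : ℕ) + d, hlt⟩ (by simp)
          exact h1.trans h2
      intro i j hij
      exact gen ((j : ℕ) - (i : ℕ)) i j (by omega)
  -- compute the cardinality as a product of interval sizes
  have e1 : {μ : Fin n → ℕ //
        (∀ i j : Fin n, i ≤ j → μ j ≤ μ i) ∧
        (∀ i : Fin n,
          lam i.succ - (n - ((i : ℕ) + 1)) ≤ μ i ∧
            μ i ≤ lam i.castSucc - (n - (i : ℕ))) ∧
        (∀ i : Fin n, μ i ≤ ν i - (n - 1 - (i : ℕ)) ∧
            ν i - (n - 1 - (i : ℕ)) ≤ μ i + 1)} ≃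
      ∀ i : Fin n, {x : ℕ // x ∈ Finset.Icc (lo i) (hi i)} :=
    (Equiv.subtypeEquivRight hequiv).trans Equiv.subtypePiEquivPi
  rw [Nat.card_congr e1, Nat.card_pi]
  have hcard : ∀ i : Fin n,
      Nat.card {x : ℕ // x ∈ Finset.Icc (lo i) (hi i)} = hi i + 1 - lo i := by
    intro i
    rw [Nat.card_eq_finsetCard, Nat.card_Icc]
  -- per-index factor
  have hfac : ∀ i : Fin n, hi i + 1 - lo i =
      if lam i.succ ≤ ν i ∧ ν i ≤ lam i.castSucc then
        (if lam i.succ < ν i ∧ ν i < lam i.castSucc then 2 else 1) else 0 := by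
    intro i
    have h1 : n - ((i : ℕ) + 1) ≤ lam i.succ := by
      have := hlamge i.succ
      simpa using this
    have h2 : n - (i : ℕ) ≤ lam i.castSucc := by
      have := hlamge i.castSucc
      simpa using this
    have h3 : n - 1 - (i : ℕ) ≤ ν i := hνge i
    have h4 : lam i.succ < lam i.castSucc := hlam _ _ (Fin.castSucc_lt_succ (i := i))
    have h5 : (i : ℕ) < n := i.isLt
    simp only [hlo, hhi]
    split_ifs with hA hB <;> omega
  calc (∏ i : Fin n, Nat.card {x : ℕ // x ∈ Finset.Icc (lo i) (hi i)})
      = ∏ i : Fin n,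
          (if lam i.succ ≤ ν i ∧ ν i ≤ lam i.castSucc then
            (if lam i.succ < ν i ∧ ν i < lam i.castSucc then 2 else 1) else 0) := by
        exact Finset.prod_congr rfl (fun i _ => by rw [hcard i, hfac i])
    _ = _ := by
        by_cases hall : ∀ i : Fin n, lam i.succ ≤ ν i ∧ ν i ≤ lam i.castSucc
        · rw [if_pos hall]
          calc (∏ i : Fin n,
              (if lam i.succ ≤ ν i ∧ ν i ≤ lam i.castSucc then
                (if lam i.succ < ν i ∧ ν i < lam i.castSucc then 2 else 1) else 0))
              = ∏ i : Fin n,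
                  2 ^ (if lam i.succ < ν i ∧ ν i < lam i.castSucc then 1 else 0) := by
                refine Finset.prod_congr rfl (fun i _ => ?_)
                rw [if_pos (hall i)]
                split_ifs <;> rfl
            _ = 2 ^ ∑ i : Fin n,
                  (if lam i.succ < ν i ∧ ν i < lam i.castSucc then 1 else 0) :=
                Finset.prod_pow_eq_pow_sum _ _ _
            _ = _ := by rw [Finset.card_filter]
        · rw [if_neg hall]
          obtain ⟨i0, hi0⟩ := not_forall.mp hall
          exact Finset.prod_eq_zero (Finset.mem_univ i0) (by rw [if_neg hi0])
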